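/- Let X be a set and 𝓣 ⊆ 𝒫(X) such that for every two distinct x, y ∈ X there is a smallest set B_𝓣(x,y) ∈ 𝓣 containing both x and y. Define u(x,y) = B_𝓣(x,y) for x ≠ y and u(x,x) = ∅, with values in 𝓣 ∪ {∅} ordered by inclusion. Then u is an ultrametric on X with least value ∅. -/
import Mathlib


/-- If every two distinct points of `X` are contained in a smallest member of `𝓣`,
then `u(x,y) = B_𝓣(x,y)` (and `u(x,x) = ∅`) is an ultrametric on `X` with value
set contained in `𝓣 ∪ {∅}` (ordered by inclusion) and least value `∅`. -/
theorem induced_ultrametric {X : Type*} (T : Set (Set X)) (u : X → X → Set X)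
    (hdiag : ∀ x, u x x = ∅)
    (hu : ∀ x y : X, x ≠ y →
      u x y ∈ T ∧ x ∈ u x y ∧ y ∈ u x y ∧ ∀ S ∈ T, x ∈ S → y ∈ S → u x y ⊆ S) :
    (∀ x y, u x y ∈ insert (∅ : Set X) T) ∧
    (∀ x y, u x y = u y x) ∧
    (∀ x y, u x y = ∅ ↔ x = y) ∧
    (∀ x y z : X, ∀ γ ∈ insert (∅ : Set X) T, u x y ⊆ γ → u y z ⊆ γ → u x z ⊆ γ) := by
  refine ⟨?_, ?_, ?_, ?_⟩
  · intro x y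
    by_cases h : x = y
    · subst h; simp [hdiag]
    · exact Set.mem_insert_of_mem _ (hu x y h).1
  · intro x y
    by_cases h : x = y
    · subst h; rfl
    · obtain ⟨hT, hx, hy, hmin⟩ := hu x y h
      obtain ⟨hT', hy', hx', hmin'⟩ := hu y x (Ne.symm h)
      exact Set.Subset.antisymm (hmin _ hT' hx' hy') (hmin' _ hT hy hx)
  · intro x y
    constructor
    · intro h
      by_contra hne
      exact (h ▸ (hu x y hne).2.1 : x ∈ (∅ : Set X))
    · intro h; subst h; exact hdiag x
  · intro x y z γ hγ hxy hyz
    by_cases hxy' : x = y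
    · subst hxy'; exact hyz
    by_cases hyz' : y = z
    · subst hyz'; exact hxy
    by_cases hxz : x = z
    · subst hxz; rw [hdiag]; exact Set.empty_subset _
    obtain ⟨hT1, hx1, hy1, _⟩ := hu x y hxy'
    obtain ⟨hT2, hy2, hz2, _⟩ := hu y z hyz'
    obtain ⟨_, _, _, hmin⟩ := hu x z hxz
    rcases hγ with h | h
    · subst h; exact absurd (hxy hx1) (Set.notMem_empty x)
    · exact hmin γ h (hxy hx1) (hyz hz2)
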